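/- For every real τ with 0 < τ < 2, the function μ_τ is strictly decreasing on the interval [0, 1/2]. -/

import Mathlib

/-- `μ_τ(β) = β log β + (1−β) log(1−β) + τ β(1−β)`; since `Real.log 0 = 0` in Mathlib,
this automatically satisfies the convention `μ_τ(0) = 0`. -/
noncomputable def muFun (τ β : ℝ) : ℝ :=
  β * Real.log β + (1 - β) * Real.log (1 - β) + τ * β * (1 - β)

lemma gAux_hasDerivAt (x : ℝ) (hx0 : 0 < x) (hx1 : x < 1) :
    HasDerivAt (fun x : ℝ => Real.log (1 - x) - Real.log x - 2 * (1 - 2 * x))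
      (-(1 / (1 - x)) - 1 / x + 4) x := by
  have h1x : (0:ℝ) < 1 - x := by linarith
  have h1 : HasDerivAt (fun x : ℝ => 1 - x) (-1) x := (hasDerivAt_id x).const_sub 1
  have h2 : HasDerivAt (fun x : ℝ => Real.log (1 - x)) ((1 - x)⁻¹ * (-1)) x :=
    (Real.hasDerivAt_log h1x.ne').comp x h1
  have h3 : HasDerivAt (fun x : ℝ => Real.log x) x⁻¹ x := Real.hasDerivAt_log hx0.ne'
  have h4 : HasDerivAt (fun x : ℝ => 2 * (1 - 2 * x)) (2 * -(2 * 1)) x :=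
    (((hasDerivAt_id x).const_mul 2).const_sub 1).const_mul 2
  have := (h2.sub h3).sub h4
  refine this.congr_deriv ?_
  ring

lemma key_ineq (x : ℝ) (hx0 : 0 < x) (hx : x < 1 / 2) :
    2 * (1 - 2 * x) < Real.log (1 - x) - Real.log x := by
  set g : ℝ → ℝ := fun x => Real.log (1 - x) - Real.log x - 2 * (1 - 2 * x) with hg
  have hanti : StrictAntiOn g (Set.Ioc (0:ℝ) (1/2)) := by
    apply strictAntiOn_of_deriv_neg (convex_Ioc _ _)
    · have c1 : ContinuousOn (fun x : ℝ => Real.log (1 - x)) (Set.Ioc (0:ℝ) (1/2)) := by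
        apply Real.continuousOn_log.comp (continuous_const.sub continuous_id).continuousOn
        intro y hy
        simp only [Set.mem_compl_iff, Set.mem_singleton_iff, id]
        obtain ⟨hy0, hy2⟩ := hy
        intro h
        simp only [Pi.sub_apply, id] at h
        nlinarith
      have c2 : ContinuousOn (fun x : ℝ => Real.log x) (Set.Ioc (0:ℝ) (1/2)) :=
        Real.continuousOn_log.mono (fun y hy => ne_of_gt hy.1)
      have c3 : ContinuousOn (fun x : ℝ => 2 * (1 - 2 * x)) (Set.Ioc (0:ℝ) (1/2)) :=
        Continuous.continuousOn (by continuity)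
      exact (c1.sub c2).sub c3
    · intro y hy
      rw [interior_Ioc] at hy
      obtain ⟨hy0, hy2⟩ := hy
      have hy1 : y < 1 := by linarith
      have h1y : (0:ℝ) < 1 - y := by linarith
      rw [(gAux_hasDerivAt y hy0 hy1).deriv]
      have h2y : (0:ℝ) < 1 - 2*y := by linarith
      have hsq : (0:ℝ) < (1 - 2*y)^2 := by positivity
      have : -(1 / (1 - y)) - 1 / y + 4 = -((1 - 2*y)^2 / (y * (1 - y))) := by
        field_simp; ring
      rw [this]
      have : (0:ℝ) < (1 - 2*y)^2 / (y * (1 - y)) := div_pos hsq (by positivity)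
      linarith
  have hmem : x ∈ Set.Ioc (0:ℝ) (1/2) := ⟨hx0, le_of_lt hx⟩
  have hmem2 : (1/2 : ℝ) ∈ Set.Ioc (0:ℝ) (1/2) := ⟨by norm_num, le_refl _⟩
  have := hanti hmem hmem2 hx
  have hg2 : g (1/2) = 0 := by norm_num [hg]
  rw [hg2] at this
  simp only [hg] at this
  linarith

theorem muFun_hasDerivAt (τ x : ℝ) (hx0 : 0 < x) (hx1 : x < 1) :
    HasDerivAt (muFun τ) (Real.log x - Real.log (1 - x) + τ * (1 - 2 * x)) x := by
  have h1x : (0:ℝ) < 1 - x := by linarith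
  have h1 : HasDerivAt (fun x : ℝ => x * Real.log x) (Real.log x + 1) x :=
    Real.hasDerivAt_mul_log hx0.ne'
  have hs : HasDerivAt (fun x : ℝ => 1 - x) (-1) x := (hasDerivAt_id x).const_sub 1
  have h2 : HasDerivAt (fun x : ℝ => (1 - x) * Real.log (1 - x))
      ((Real.log (1 - x) + 1) * (-1)) x :=
    (Real.hasDerivAt_mul_log h1x.ne').comp x hs
  have h3 : HasDerivAt (fun x : ℝ => τ * x * (1 - x))
      (τ * 1 * (1 - x) + τ * x * (-1)) x := by
    exact ((hasDerivAt_id x).const_mul τ).mul hs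
  have := (h1.add h2).add h3
  have heq : Real.log x - Real.log (1 - x) + τ * (1 - 2 * x)
      = Real.log x + 1 + (Real.log (1 - x) + 1) * (-1) + (τ * 1 * (1 - x) + τ * x * (-1)) := by
    ring
  rw [heq]
  exact this

/-- For `0 < τ < 2`, the function `μ_τ` is strictly decreasing on `[0, 1/2]`. -/
theorem muFun_strictAntiOn (τ : ℝ) (hτ0 : 0 < τ) (hτ2 : τ < 2) :
    StrictAntiOn (muFun τ) (Set.Icc (0 : ℝ) (1 / 2)) := by
  apply strictAntiOn_of_deriv_neg (convex_Icc _ _)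
  · apply Continuous.continuousOn
    unfold muFun
    apply Continuous.add
    apply Continuous.add
    · exact Real.continuous_mul_log
    · exact Real.continuous_mul_log.comp (continuous_const.sub continuous_id)
    · continuity
  · intro x hx
    rw [interior_Icc] at hx
    obtain ⟨hx0, hx2⟩ := hx
    have hx1 : x < 1 := by linarith
    rw [(muFun_hasDerivAt τ x hx0 hx1).deriv]
    have hkey := key_ineq x hx0 hx2
    have h12 : 0 < 1 - 2 * x := by linarith
    have : τ * (1 - 2 * x) < 2 * (1 - 2 * x) := by nlinarith
    linarith
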